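/- arXiv:2509.21564 — 2 statements merged into one kernel-verified Lean document; each statement's English description precedes it below -/
import Mathlib

section
/- Let A be an abelian category and Δ: Pr(A) → Pr(A^op) the duality assignment sending a preradical τ to (τ*)^op. Then for any preradicals τ, σ of A: Δ(σ:τ) = Δ(τ)·Δ(σ) and Δ(τ·σ) = (Δ(σ):Δ(τ)). -/
open CategoryTheory CategoryTheory.Limits

universe v u

variable {A : Type u} [Category.{v} A] [Abelian A]

/-- The product `τ·σ` of preradicals, represented by `σ ∘ τS : TS ⟶ 1`. -/
noncomputable def preradProd {C : Type u} [Category.{v} C] [Abelian C]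
    (τ σ : Subobject (𝟭 C)) : Subobject (𝟭 C) :=
  imageSubobject
    ((Functor.whiskerLeft (σ : C ⥤ C) τ.arrow ≫ σ.arrow :
      (σ : C ⥤ C) ⋙ (τ : C ⥤ C) ⟶ 𝟭 C))

/-- The coproduct `(σ:τ)` of preradicals: `Ker(1 ⟶ S* ⟶ T*S*)`. -/
noncomputable def preradCoprod {C : Type u} [Category.{v} C] [Abelian C]
    (σ τ : Subobject (𝟭 C)) : Subobject (𝟭 C) :=
  kernelSubobject
    (cokernel.π σ.arrow ≫ Functor.whiskerLeft (cokernel σ.arrow) (cokernel.π τ.arrow) :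
      𝟭 C ⟶ cokernel σ.arrow ⋙ cokernel τ.arrow)

/-- The duality assignment `Δ : Pr(A) → Pr(Aᵒᵖ)`, `τ ↦ (τ*)ᵒᵖ`. -/
noncomputable def preradDelta (τ : Subobject (𝟭 A)) : Subobject (𝟭 Aᵒᵖ) :=
  imageSubobject
    ((NatTrans.op (cokernel.π τ.arrow)) : (cokernel τ.arrow).op ⟶ 𝟭 Aᵒᵖ)

instance monoNatTransOp {F G : A ⥤ A} (f : F ⟶ G) [Epi f] : Mono (NatTrans.op f) := by
  have : ∀ X, Mono ((NatTrans.op f).app X) :=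
    fun X => inferInstanceAs (Mono ((f.app X.unop).op))
  exact NatTrans.mono_of_mono_app _

lemma monoWhiskerLeft {C : Type*} [Category C] [Abelian C] (F : C ⥤ C) {G H : C ⥤ C}
    (η : G ⟶ H) [Mono η] : Mono (Functor.whiskerLeft F η) := by
  have : ∀ X, Mono ((Functor.whiskerLeft F η).app X) := fun X => inferInstanceAs (Mono (η.app (F.obj X)))
  exact NatTrans.mono_of_mono_app _

lemma epiWhiskerLeft' {C : Type*} [Category C] [Abelian C] (F : C ⥤ C) {G H : C ⥤ C}
    (η : G ⟶ H) [Epi η] : Epi (Functor.whiskerLeft F η) := by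
  have : ∀ X, Epi ((Functor.whiskerLeft F η).app X) := fun X => inferInstanceAs (Epi (η.app (F.obj X)))
  exact NatTrans.epi_of_epi_app _

lemma whiskerExchange {C : Type*} [Category C] {F G P Q : C ⥤ C} (φ : F ⟶ G) (a : P ⟶ Q) :
    Functor.whiskerRight φ P ≫ Functor.whiskerLeft G a = Functor.whiskerLeft F a ≫ Functor.whiskerRight φ Q := by
  ext X
  exact a.naturality (φ.app X)

lemma opCompZero {F G H : A ⥤ A} {f : F ⟶ G} {g : G ⟶ H} (h : f ≫ g = 0) :
    NatTrans.op g ≫ NatTrans.op f = 0 := by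
  ext X
  show (f.app X.unop ≫ g.app X.unop).op = _
  rw [← NatTrans.comp_app, h]
  simp

noncomputable def opKernelIsLimit {F G : A ⥤ A} (m : F ⟶ G) [Mono m] :
    IsLimit (KernelFork.ofι (NatTrans.op (cokernel.π m))
      (show NatTrans.op (cokernel.π m) ≫ NatTrans.op m = 0 by
        rw [show NatTrans.op (cokernel.π m) ≫ NatTrans.op m
            = NatTrans.op (m ≫ cokernel.π m) from rfl, cokernel.condition]
        rfl) : KernelFork (NatTrans.op m)) :=
  isLimitForkMapOfIsLimit' (Functor.opUnopEquiv A A).functor _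
    (CokernelCofork.IsColimit.ofπOp (cokernel.π m) (cokernel.condition m) (cokernelIsCokernel m))

lemma kernelSubobjectOpEq {F G : A ⥤ A} (m : F ⟶ G) [Mono m] :
    kernelSubobject (NatTrans.op m) = Subobject.mk (NatTrans.op (cokernel.π m)) := by
  refine Subobject.mk_eq_mk_of_comm _ _
    (IsLimit.conePointUniqueUpToIso (kernelIsKernel (NatTrans.op m)) (opKernelIsLimit m)) ?_
  exact IsLimit.conePointUniqueUpToIso_hom_comp _ _ WalkingParallelPair.zero

noncomputable def opCokernelIsColimit {F G : A ⥤ A} (m : F ⟶ G) [Mono m] :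
    IsColimit (CokernelCofork.ofπ (NatTrans.op m)
      (show NatTrans.op (cokernel.π m) ≫ NatTrans.op m = 0 by
        rw [show NatTrans.op (cokernel.π m) ≫ NatTrans.op m
            = NatTrans.op (m ≫ cokernel.π m) from rfl, cokernel.condition]
        rfl) : CokernelCofork (NatTrans.op (cokernel.π m))) :=
  isColimitCoforkMapOfIsColimit' (Functor.opUnopEquiv A A).functor _
    (KernelFork.IsLimit.ofιOp m (cokernel.condition m)
      (Abelian.monoIsKernelOfCokernel
        (CokernelCofork.ofπ (cokernel.π m) (cokernel.condition m)) (cokernelIsCokernel m)))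

theorem part1 (τ σ : Subobject (𝟭 A)) :
    preradDelta (preradCoprod σ τ) = preradProd (preradDelta τ) (preradDelta σ) := by
  set t := τ.arrow with ht
  set s := σ.arrow with hs
  set k : 𝟭 A ⟶ cokernel s ⋙ cokernel t :=
    cokernel.π s ≫ Functor.whiskerLeft (cokernel s) (cokernel.π t) with hk
  haveI : Epi (Functor.whiskerLeft (cokernel s) (cokernel.π t)) := epiWhiskerLeft' _ _
  haveI : Epi k := epi_comp _ _
  have hν : IsLimit (KernelFork.ofι (kernelSubobject k).arrow (kernelSubobject_arrow_comp k)) :=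
    IsLimit.ofIsoLimit (kernelIsKernel k)
      (Fork.ext (kernelSubobjectIso k).symm (by simp))
  have hco : IsColimit (CokernelCofork.ofπ k (KernelFork.condition _)) :=
    Abelian.epiIsCokernelOfKernel _ hν
  obtain ⟨c1, hc1⟩ : ∃ c : cokernel ((kernelSubobject k).arrow) ≅ cokernel s ⋙ cokernel t,
      cokernel.π (kernelSubobject k).arrow ≫ c.hom = k :=
    ⟨IsColimit.coconePointUniqueUpToIso (colimit.isColimit _) hco,
      IsColimit.comp_coconePointUniqueUpToIso_hom (colimit.isColimit _) hco WalkingParallelPair.one⟩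
  -- LHS
  have e1 : preradDelta (preradCoprod σ τ)
      = Subobject.mk (NatTrans.op (cokernel.π (kernelSubobject k).arrow)) :=
    imageSubobject_mono _
  have e2 : Subobject.mk (NatTrans.op (cokernel.π (kernelSubobject k).arrow))
      = Subobject.mk (NatTrans.op k) := by
    refine Subobject.mk_eq_mk_of_comm _ _ (NatIso.op c1.symm) ?_
    have : k ≫ c1.inv = cokernel.π (kernelSubobject k).arrow := by
      rw [Iso.comp_inv_eq]; exact hc1.symm
    exact congrArg NatTrans.op this
  -- RHS
  have hΔτ : preradDelta τ = Subobject.mk (NatTrans.op (cokernel.π t)) := imageSubobject_mono _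
  have hΔσ : preradDelta σ = Subobject.mk (NatTrans.op (cokernel.π s)) := imageSubobject_mono _
  rw [e1, e2, hΔτ, hΔσ]
  haveI : Mono (Functor.whiskerLeft ((Subobject.mk (NatTrans.op (cokernel.π s)) : Subobject (𝟭 Aᵒᵖ)) :
      Aᵒᵖ ⥤ Aᵒᵖ) (Subobject.mk (NatTrans.op (cokernel.π t))).arrow) := monoWhiskerLeft _ _
  have e3 : preradProd (Subobject.mk (NatTrans.op (cokernel.π t)))
        (Subobject.mk (NatTrans.op (cokernel.π s)))
      = Subobject.mk (Functor.whiskerLeft ((Subobject.mk (NatTrans.op (cokernel.π s)) :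
            Subobject (𝟭 Aᵒᵖ)) : Aᵒᵖ ⥤ Aᵒᵖ)
          (Subobject.mk (NatTrans.op (cokernel.π t))).arrow
          ≫ (Subobject.mk (NatTrans.op (cokernel.π s))).arrow) :=
    imageSubobject_mono _
  rw [e3]
  refine (Subobject.mk_eq_mk_of_comm _ _
    (Functor.isoWhiskerRight (Subobject.underlyingIso (NatTrans.op (cokernel.π s)))
        ((Subobject.mk (NatTrans.op (cokernel.π t)) : Subobject (𝟭 Aᵒᵖ)) : Aᵒᵖ ⥤ Aᵒᵖ)
      ≪≫ Functor.isoWhiskerLeft ((cokernel s).op)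
        (Subobject.underlyingIso (NatTrans.op (cokernel.π t)))) ?_).symm
  show (Functor.whiskerRight (Subobject.underlyingIso (NatTrans.op (cokernel.π s))).hom _
      ≫ Functor.whiskerLeft ((cokernel s).op) (Subobject.underlyingIso (NatTrans.op (cokernel.π t))).hom)
      ≫ NatTrans.op k = _
  rw [show (NatTrans.op k : (cokernel s ⋙ cokernel t).op ⟶ 𝟭 Aᵒᵖ)
      = Functor.whiskerLeft ((cokernel s).op) (NatTrans.op (cokernel.π t)) ≫ NatTrans.op (cokernel.π s)
      from rfl]
  rw [Category.assoc, ← Category.assoc (Functor.whiskerLeft _ _), ← Functor.whiskerLeft_comp,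
    Subobject.underlyingIso_hom_comp_eq_mk]
  rw [← Category.assoc, whiskerExchange]
  rw [Category.assoc]
  congr 1
  exact Subobject.underlyingIso_hom_comp_eq_mk _

set_option maxHeartbeats 1000000 in
theorem part2 (τ σ : Subobject (𝟭 A)) :
    preradDelta (preradProd τ σ) = preradCoprod (preradDelta σ) (preradDelta τ) := by
  set t := τ.arrow with ht
  set s := σ.arrow with hs
  set m : (σ : A ⥤ A) ⋙ (τ : A ⥤ A) ⟶ 𝟭 A := Functor.whiskerLeft (σ : A ⥤ A) τ.arrow ≫ σ.arrow with hm
  haveI : Mono (Functor.whiskerLeft (σ : A ⥤ A) τ.arrow) := monoWhiskerLeft _ _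
  haveI : Mono m := mono_comp _ _
  have p1 : preradProd τ σ = Subobject.mk m := imageSubobject_mono _
  rw [p1]
  have e1 : preradDelta (Subobject.mk m)
      = Subobject.mk (NatTrans.op (cokernel.π (Subobject.mk m).arrow)) := imageSubobject_mono _
  have hco2 : IsColimit (CokernelCofork.ofπ (cokernel.π m)
      (by rw [← Subobject.underlyingIso_hom_comp_eq_mk m, Category.assoc,
            cokernel.condition, comp_zero] :
          (Subobject.mk m).arrow ≫ cokernel.π m = 0) :
      CokernelCofork (Subobject.mk m).arrow) :=
    isCokernelEpiComp (cokernelIsCokernel m) (Subobject.underlyingIso m).hom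
      (Subobject.underlyingIso_hom_comp_eq_mk m).symm
  obtain ⟨c2, hc2⟩ : ∃ c : cokernel ((Subobject.mk m).arrow) ≅ cokernel m,
      cokernel.π (Subobject.mk m).arrow ≫ c.hom = cokernel.π m :=
    ⟨IsColimit.coconePointUniqueUpToIso (colimit.isColimit _) hco2, by simp⟩
  have e2 : Subobject.mk (NatTrans.op (cokernel.π (Subobject.mk m).arrow))
      = Subobject.mk (NatTrans.op (cokernel.π m)) := by
    refine Subobject.mk_eq_mk_of_comm _ _ (NatIso.op c2.symm) ?_
    have : cokernel.π m ≫ c2.inv = cokernel.π (Subobject.mk m).arrow := by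
      rw [Iso.comp_inv_eq]; exact hc2.symm
    exact congrArg NatTrans.op this
  have hΔτ : preradDelta τ = Subobject.mk (NatTrans.op (cokernel.π t)) := imageSubobject_mono _
  have hΔσ : preradDelta σ = Subobject.mk (NatTrans.op (cokernel.π s)) := imageSubobject_mono _
  rw [e1, e2, hΔσ, hΔτ]
  -- RHS cokernel identifications
  have hcoS : IsColimit (CokernelCofork.ofπ (NatTrans.op s)
      (by rw [← Subobject.underlyingIso_hom_comp_eq_mk (NatTrans.op (cokernel.π s)),
            Category.assoc, opCompZero (cokernel.condition s), comp_zero] :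
          (Subobject.mk (NatTrans.op (cokernel.π s))).arrow ≫ NatTrans.op s = 0) :
      CokernelCofork ((Subobject.mk (NatTrans.op (cokernel.π s))).arrow)) :=
    isCokernelEpiComp (opCokernelIsColimit s) (Subobject.underlyingIso _).hom
      (Subobject.underlyingIso_hom_comp_eq_mk _).symm
  obtain ⟨eS, heS⟩ : ∃ e : cokernel ((Subobject.mk (NatTrans.op (cokernel.π s))).arrow)
        ≅ (σ : A ⥤ A).op,
      cokernel.π (Subobject.mk (NatTrans.op (cokernel.π s))).arrow ≫ e.hom = NatTrans.op s :=
    ⟨IsColimit.coconePointUniqueUpToIso (colimit.isColimit _) hcoS, by simp⟩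
  have hcoT : IsColimit (CokernelCofork.ofπ (NatTrans.op t)
      (by rw [← Subobject.underlyingIso_hom_comp_eq_mk (NatTrans.op (cokernel.π t)),
            Category.assoc, opCompZero (cokernel.condition t), comp_zero] :
          (Subobject.mk (NatTrans.op (cokernel.π t))).arrow ≫ NatTrans.op t = 0) :
      CokernelCofork ((Subobject.mk (NatTrans.op (cokernel.π t))).arrow)) :=
    isCokernelEpiComp (opCokernelIsColimit t) (Subobject.underlyingIso _).hom
      (Subobject.underlyingIso_hom_comp_eq_mk _).symm
  obtain ⟨eT, heT⟩ : ∃ e : cokernel ((Subobject.mk (NatTrans.op (cokernel.π t))).arrow)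
        ≅ (τ : A ⥤ A).op,
      cokernel.π (Subobject.mk (NatTrans.op (cokernel.π t))).arrow ≫ e.hom = NatTrans.op t :=
    ⟨IsColimit.coconePointUniqueUpToIso (colimit.isColimit _) hcoT, by simp⟩
  show Subobject.mk (NatTrans.op (cokernel.π m)) = kernelSubobject
    (cokernel.π (Subobject.mk (NatTrans.op (cokernel.π s))).arrow
      ≫ Functor.whiskerLeft (cokernel (Subobject.mk (NatTrans.op (cokernel.π s))).arrow)
        (cokernel.π (Subobject.mk (NatTrans.op (cokernel.π t))).arrow))
  set j : cokernel ((Subobject.mk (NatTrans.op (cokernel.π s))).arrow)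
        ⋙ cokernel ((Subobject.mk (NatTrans.op (cokernel.π t))).arrow)
      ≅ (σ : A ⥤ A).op ⋙ (τ : A ⥤ A).op :=
    Functor.isoWhiskerLeft _ eT ≪≫ Functor.isoWhiskerRight eS ((τ : A ⥤ A).op) with hj
  have hq : (cokernel.π (Subobject.mk (NatTrans.op (cokernel.π s))).arrow
      ≫ Functor.whiskerLeft (cokernel (Subobject.mk (NatTrans.op (cokernel.π s))).arrow)
        (cokernel.π (Subobject.mk (NatTrans.op (cokernel.π t))).arrow)) ≫ j.hom
      = NatTrans.op m := by
    rw [hj]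
    show _ ≫ Functor.whiskerLeft _ eT.hom ≫ Functor.whiskerRight eS.hom _ = _
    rw [Category.assoc, ← Category.assoc (Functor.whiskerLeft _ _), ← Functor.whiskerLeft_comp, heT]
    rw [← whiskerExchange]
    rw [show Functor.whiskerRight eS.hom ((𝟭 A).op) = eS.hom from rfl]
    rw [← Category.assoc, heS]
    rfl
  rw [show (cokernel.π (Subobject.mk (NatTrans.op (cokernel.π s))).arrow
      ≫ Functor.whiskerLeft (cokernel (Subobject.mk (NatTrans.op (cokernel.π s))).arrow)
        (cokernel.π (Subobject.mk (NatTrans.op (cokernel.π t))).arrow))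
      = NatTrans.op m ≫ j.inv by rw [Iso.eq_comp_inv]; exact hq]
  rw [kernelSubobject_comp_mono]
  exact (kernelSubobjectOpEq m).symm

/-- `Δ(σ:τ) = Δ(τ)·Δ(σ)` and `Δ(τ·σ) = (Δ(σ):Δ(τ))`. -/
theorem preradDelta_coprod_prod (τ σ : Subobject (𝟭 A)) :
    preradDelta (preradCoprod σ τ) = preradProd (preradDelta τ) (preradDelta σ) ∧
      preradDelta (preradProd τ σ) = preradCoprod (preradDelta σ) (preradDelta τ) :=
  ⟨part1 τ σ, part2 τ σ⟩
end

section
/- Let A be an abelian category and τ a preradical of A. Then τ is a radical if and only if Δ(τ) is an idempotent preradical of A^op, and τ is idempotent if and only if Δ(τ) is a radical of A^op, where Δ is the duality assignment τ ↦ (τ*)^op. -/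
open CategoryTheory CategoryTheory.Limits

universe v u

variable {A : Type u} [Category.{v} A] [Abelian A]

namespace PreradicalDualityAux

open Opposite

/-- `NatTrans.op` is contravariantly functorial. -/
lemma op_comp' {F G H : A ⥤ A} (α : F ⟶ G) (β : G ⟶ H) :
    NatTrans.op (α ≫ β) = NatTrans.op β ≫ NatTrans.op α := by
  ext X; rfl

lemma op_zero' {F G : A ⥤ A} : NatTrans.op (0 : F ⟶ G) = 0 := by
  ext X
  simp [NatTrans.op]

lemma op_removeOp' {F : A ⥤ A} {W : Aᵒᵖ ⥤ Aᵒᵖ} (g : F.op ⟶ W) :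
    NatTrans.op (NatTrans.removeOp (show F.op ⟶ (W.unop).op from g)) = g := by
  ext X; rfl

lemma op_removeOp₂ {F : A ⥤ A} {W : Aᵒᵖ ⥤ Aᵒᵖ} (g : W ⟶ F.op) :
    NatTrans.op (NatTrans.removeOp (show (W.unop).op ⟶ F.op from g)) = g := by
  ext X; rfl

instance natTransOpMono {F G : A ⥤ A} (α : F ⟶ G) [Epi α] : Mono (NatTrans.op α) := by
  haveI : ∀ X : Aᵒᵖ, Mono ((NatTrans.op α).app X) := by
    intro X
    show Mono (α.app X.unop).op
    infer_instance
  exact NatTrans.mono_of_mono_app _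

instance natTransOpEpi {F G : A ⥤ A} (α : F ⟶ G) [Mono α] : Epi (NatTrans.op α) := by
  haveI : ∀ X : Aᵒᵖ, Epi ((NatTrans.op α).app X) := by
    intro X
    show Epi (α.app X.unop).op
    infer_instance
  exact NatTrans.epi_of_epi_app _

/-- If `α` is a kernel of `β` in `A ⥤ A`, then `op α` is a cokernel of `op β`. -/
noncomputable def isCokernelOfOpKernel {F G H : A ⥤ A} (α : F ⟶ G) (β : G ⟶ H) [Mono α]
    (w : α ≫ β = 0) (h : IsLimit (KernelFork.ofι α w))
    (w' : NatTrans.op β ≫ NatTrans.op α = 0) :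
    IsColimit (CokernelCofork.ofπ (NatTrans.op α) w') := by
  have hcond : ∀ (W : Aᵒᵖ ⥤ Aᵒᵖ) (g : G.op ⟶ W), NatTrans.op β ≫ g = 0 →
      NatTrans.removeOp (show G.op ⟶ (W.unop).op from g) ≫ β = 0 := by
    intro W g hg
    ext X
    refine Quiver.Hom.op_inj ?_
    simpa using NatTrans.congr_app hg (op X)
  refine CokernelCofork.IsColimit.ofπ _ _
    (fun {W} g hg => NatTrans.op (h.lift (KernelFork.ofι
      (NatTrans.removeOp (show G.op ⟶ (W.unop).op from g)) (hcond W g hg)))) ?_ ?_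
  · -- fac
    intro W g hg
    have hl := h.fac (KernelFork.ofι (NatTrans.removeOp (show G.op ⟶ (W.unop).op from g))
      (hcond W g hg)) WalkingParallelPair.zero
    simp only [Fork.app_zero_eq_ι, Fork.ι_ofι] at hl
    rw [← op_comp', hl, op_removeOp']
  · -- uniq
    intro W g hg mm hm
    have h1 : NatTrans.removeOp (show F.op ⟶ (W.unop).op from mm) ≫ α
        = NatTrans.removeOp (show G.op ⟶ (W.unop).op from g) := by
      ext X
      refine Quiver.Hom.op_inj ?_
      simpa using NatTrans.congr_app hm (op X)
    have hl := h.fac (KernelFork.ofι (NatTrans.removeOp (show G.op ⟶ (W.unop).op from g))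
      (hcond W g hg)) WalkingParallelPair.zero
    simp only [Fork.app_zero_eq_ι, Fork.ι_ofι] at hl
    have h4 : NatTrans.removeOp (show F.op ⟶ (W.unop).op from mm)
        = h.lift (KernelFork.ofι (NatTrans.removeOp (show G.op ⟶ (W.unop).op from g))
            (hcond W g hg)) := by
      rw [← cancel_mono α, h1, hl]
    calc mm = NatTrans.op (NatTrans.removeOp (show F.op ⟶ (W.unop).op from mm)) :=
            (op_removeOp' mm).symm
      _ = _ := by rw [h4]

/-- If `β` is a cokernel of `α` in `A ⥤ A`, then `op β` is a kernel of `op α`. -/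
noncomputable def isKernelOfOpCokernel {F G H : A ⥤ A} (α : F ⟶ G) (β : G ⟶ H) [Epi β]
    (w : α ≫ β = 0) (h : IsColimit (CokernelCofork.ofπ β w))
    (w' : NatTrans.op β ≫ NatTrans.op α = 0) :
    IsLimit (KernelFork.ofι (NatTrans.op β) w') := by
  have hcond : ∀ (W : Aᵒᵖ ⥤ Aᵒᵖ) (g : W ⟶ G.op), g ≫ NatTrans.op α = 0 →
      α ≫ NatTrans.removeOp (show (W.unop).op ⟶ G.op from g) = 0 := by
    intro W g hg
    ext X
    refine Quiver.Hom.op_inj ?_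
    simpa using NatTrans.congr_app hg (op X)
  refine KernelFork.IsLimit.ofι _ _
    (fun {W} g hg => NatTrans.op (h.desc (CokernelCofork.ofπ
      (NatTrans.removeOp (show (W.unop).op ⟶ G.op from g)) (hcond W g hg)))) ?_ ?_
  · -- fac
    intro W g hg
    have hl := h.fac (CokernelCofork.ofπ (NatTrans.removeOp (show (W.unop).op ⟶ G.op from g))
      (hcond W g hg)) WalkingParallelPair.one
    simp only [Cofork.app_one_eq_π, Cofork.π_ofπ] at hl
    rw [← op_comp', hl, op_removeOp₂]
  · -- uniq
    intro W g hg mm hm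
    have h1 : β ≫ NatTrans.removeOp (show (W.unop).op ⟶ H.op from mm)
        = NatTrans.removeOp (show (W.unop).op ⟶ G.op from g) := by
      ext X
      refine Quiver.Hom.op_inj ?_
      simpa using NatTrans.congr_app hm (op X)
    have hl := h.fac (CokernelCofork.ofπ (NatTrans.removeOp (show (W.unop).op ⟶ G.op from g))
      (hcond W g hg)) WalkingParallelPair.one
    simp only [Cofork.app_one_eq_π, Cofork.π_ofπ] at hl
    have h4 : NatTrans.removeOp (show (W.unop).op ⟶ H.op from mm)
        = h.desc (CokernelCofork.ofπ (NatTrans.removeOp (show (W.unop).op ⟶ G.op from g))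
            (hcond W g hg)) := by
      rw [← cancel_epi β, h1, hl]
    calc mm = NatTrans.op (NatTrans.removeOp (show (W.unop).op ⟶ H.op from mm)) :=
            (op_removeOp₂ mm).symm
      _ = _ := by rw [h4]

/-- If `ι` is a kernel of `f` then `kernelSubobject f = mk ι`. -/
lemma kernelSubobject_eq_mk {C : Type*} [Category C] [Abelian C] {X Y Z : C} {f : X ⟶ Y}
    {ι : Z ⟶ X} [Mono ι] {w : ι ≫ f = 0} (h : IsLimit (KernelFork.ofι ι w)) :
    kernelSubobject f = Subobject.mk ι :=
  Subobject.mk_eq_mk_of_comm _ _ (IsLimit.conePointUniqueUpToIso (kernelIsKernel f) h)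
    (by simpa using
      IsLimit.conePointUniqueUpToIso_hom_comp (kernelIsKernel f) h WalkingParallelPair.zero)

/-- If `f = e ≫ m` with `e` epi and `m` mono, then `imageSubobject f = mk m`. -/
lemma imageSubobject_eq_mk {C : Type*} [Category C] [Abelian C] {X Y Z : C} {f : X ⟶ Y}
    (e : X ⟶ Z) (m : Z ⟶ Y) [Epi e] [Mono m] (comm : e ≫ m = f) :
    imageSubobject f = Subobject.mk m := by
  haveI : StrongEpi e := strongEpi_of_epi e
  exact Subobject.mk_eq_mk_of_comm _ _ (image.isoStrongEpiMono e m comm).symm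
    (image.isoStrongEpiMono_inv_comp_mono e m comm)

/-- In an abelian category, the kernel of the cokernel of a mono is that mono. -/
lemma kernelSubobject_cokernelπ {C : Type*} [Category C] [Abelian C] {X Y : C}
    (f : X ⟶ Y) [Mono f] :
    kernelSubobject (cokernel.π f) = Subobject.mk f := by
  have h := Abelian.monoIsKernelOfCokernel
    (Cofork.ofπ (cokernel.π f) ((cokernel.condition f).trans zero_comp.symm))
    (cokernelIsCokernel f)
  exact kernelSubobject_eq_mk h

lemma mk_op_le_mk_op_iff {P R : A ⥤ A} (p : 𝟭 A ⟶ P) (q : 𝟭 A ⟶ R) [Epi p] [Epi q] :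
    Subobject.mk (NatTrans.op p) ≤ Subobject.mk (NatTrans.op q)
      ↔ kernelSubobject q ≤ kernelSubobject p := by
  constructor
  · intro hle
    have hcomp : Subobject.ofMkLEMk _ _ hle ≫ NatTrans.op q = NatTrans.op p :=
      Subobject.ofMkLEMk_comp hle
    have hfac : q ≫ NatTrans.removeOp
        (show P.op ⟶ R.op from Subobject.ofMkLEMk _ _ hle) = p := by
      ext X
      refine Quiver.Hom.op_inj ?_
      have h1 := NatTrans.congr_app hcomp (op X)
      simp only [NatTrans.comp_app, NatTrans.op_app] at h1
      simp only [NatTrans.comp_app, NatTrans.removeOp_app, op_comp, Quiver.Hom.op_unop]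
      exact h1
    refine le_kernelSubobject _ _ ?_
    rw [← hfac, ← Category.assoc, kernelSubobject_arrow_comp, zero_comp]
  · intro hle
    have h0 : kernel.ι q ≫ p = 0 := by
      have h1 : (kernelSubobject q).arrow ≫ p = 0 := by
        rw [← Subobject.ofLE_arrow hle, Category.assoc, kernelSubobject_arrow_comp, comp_zero]
      rw [← kernelSubobject_arrow', Category.assoc, h1, comp_zero]
    refine Subobject.mk_le_mk_of_comm (NatTrans.op (Abelian.epiDesc q p h0)) ?_
    rw [← op_comp', Abelian.comp_epiDesc]

lemma mk_op_eq_mk_op_iff {P R : A ⥤ A} (p : 𝟭 A ⟶ P) (q : 𝟭 A ⟶ R) [Epi p] [Epi q] :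
    Subobject.mk (NatTrans.op p) = Subobject.mk (NatTrans.op q)
      ↔ kernelSubobject p = kernelSubobject q :=
  ⟨fun h => le_antisymm ((mk_op_le_mk_op_iff q p).1 h.ge) ((mk_op_le_mk_op_iff p q).1 h.le),
   fun h => le_antisymm ((mk_op_le_mk_op_iff p q).2 h.ge) ((mk_op_le_mk_op_iff q p).2 h.le)⟩

set_option maxHeartbeats 1000000 in
/-- Computation of the square of `Δτ`. -/
lemma prod_delta_eq (τ : Subobject (𝟭 A)) :
    preradProd (Subobject.mk (NatTrans.op (cokernel.π τ.arrow)))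
        (Subobject.mk (NatTrans.op (cokernel.π τ.arrow)))
      = Subobject.mk (NatTrans.op (Abelian.coimage.π
          (cokernel.π τ.arrow ≫ Functor.whiskerLeft (cokernel τ.arrow) (cokernel.π τ.arrow)))) := by
  set c : 𝟭 A ⟶ cokernel τ.arrow := cokernel.π τ.arrow with hc
  set k : 𝟭 A ⟶ cokernel τ.arrow ⋙ cokernel τ.arrow := c ≫ Functor.whiskerLeft (cokernel τ.arrow) c
    with hk
  let u := Subobject.underlyingIso (NatTrans.op c)
  let F := ((Subobject.mk (NatTrans.op c) : Subobject (𝟭 Aᵒᵖ)) : Aᵒᵖ ⥤ Aᵒᵖ)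
  have harr : (Subobject.mk (NatTrans.op c)).arrow = u.hom ≫ NatTrans.op c :=
    (Subobject.underlyingIso_hom_comp_eq_mk (NatTrans.op c)).symm
  show imageSubobject (Functor.whiskerLeft F (Subobject.mk (NatTrans.op c)).arrow
      ≫ (Subobject.mk (NatTrans.op c)).arrow) = _
  have hsplit : Functor.whiskerLeft F (Subobject.mk (NatTrans.op c)).arrow
        ≫ (Subobject.mk (NatTrans.op c)).arrow
      = (Functor.whiskerLeft F u.hom ≫ Functor.whiskerRight u.hom (cokernel τ.arrow).op)
        ≫ (Functor.whiskerLeft (cokernel τ.arrow).op (NatTrans.op c) ≫ NatTrans.op c) := by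
    rw [harr]
    ext X
    simp only [NatTrans.comp_app, Functor.whiskerLeft_app, Functor.whiskerRight_app, Category.assoc]
    congr 1
    rw [← Category.assoc, ← Category.assoc]
    congr 1
    simpa using ((NatTrans.op c).naturality (u.hom.app X)).symm
  rw [hsplit, imageSubobject_iso_comp]
  have hk' : Functor.whiskerLeft (cokernel τ.arrow).op (NatTrans.op c) ≫ NatTrans.op c
      = NatTrans.op k := by
    ext X; rfl
  rw [hk']
  have hfac : NatTrans.op k = NatTrans.op (Abelian.factorThruCoimage k)
      ≫ NatTrans.op (Abelian.coimage.π k) := by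
    rw [← op_comp', Abelian.coimage.fac]
  rw [hfac]
  exact imageSubobject_eq_mk _ _ rfl

lemma delta_idem_iff (τ : Subobject (𝟭 A)) :
    preradProd (preradDelta τ) (preradDelta τ) = preradDelta τ ↔ preradCoprod τ τ = τ := by
  have hδ : preradDelta τ = Subobject.mk (NatTrans.op (cokernel.π τ.arrow)) :=
    imageSubobject_mono _
  rw [hδ, prod_delta_eq τ, mk_op_eq_mk_op_iff]
  have e2 : kernelSubobject (Abelian.coimage.π
        (cokernel.π τ.arrow ≫ Functor.whiskerLeft (cokernel τ.arrow) (cokernel.π τ.arrow)))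
      = kernelSubobject
        (cokernel.π τ.arrow ≫ Functor.whiskerLeft (cokernel τ.arrow) (cokernel.π τ.arrow)) :=
    kernelSubobject_cokernelπ
      (kernel.ι (cokernel.π τ.arrow ≫ Functor.whiskerLeft (cokernel τ.arrow) (cokernel.π τ.arrow)))
  have e3 : kernelSubobject (cokernel.π τ.arrow) = τ := by
    rw [kernelSubobject_cokernelπ τ.arrow, Subobject.mk_arrow]
  rw [e2, e3]
  exact Iff.rfl

set_option maxHeartbeats 1600000 in
/-- Computation of the coproduct `(Δτ : Δτ)`. -/
lemma coprod_delta_eq (τ : Subobject (𝟭 A)) :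
    preradCoprod (Subobject.mk (NatTrans.op (cokernel.π τ.arrow)))
        (Subobject.mk (NatTrans.op (cokernel.π τ.arrow)))
      = kernelSubobject (NatTrans.op (Functor.whiskerLeft (τ : A ⥤ A) τ.arrow ≫ τ.arrow)) := by
  set c : 𝟭 A ⟶ cokernel τ.arrow := cokernel.π τ.arrow with hc
  set δa := (Subobject.mk (NatTrans.op c)).arrow with hδa
  have harr : δa = (Subobject.underlyingIso (NatTrans.op c)).hom ≫ NatTrans.op c :=
    (Subobject.underlyingIso_hom_comp_eq_mk (NatTrans.op c)).symm
  have hker : IsLimit (KernelFork.ofι τ.arrow (cokernel.condition τ.arrow)) :=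
    Abelian.monoIsKernelOfCokernel
      (Cofork.ofπ c ((cokernel.condition τ.arrow).trans zero_comp.symm))
      (cokernelIsCokernel τ.arrow)
  have w1 : NatTrans.op c ≫ NatTrans.op τ.arrow = 0 := by
    rw [← op_comp', cokernel.condition]; exact op_zero'
  have hco : IsColimit (CokernelCofork.ofπ (NatTrans.op τ.arrow) w1) :=
    isCokernelOfOpKernel τ.arrow c (cokernel.condition τ.arrow) hker w1
  have hco2 := isCokernelEpiComp hco ((Subobject.underlyingIso (NatTrans.op c)).hom) harr
  have hcomm : cokernel.π δa
        ≫ (IsColimit.coconePointUniqueUpToIso (cokernelIsCokernel δa) hco2).hom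
      = NatTrans.op τ.arrow := by
    simpa [Cofork.app_one_eq_π] using
      IsColimit.comp_coconePointUniqueUpToIso_hom (cokernelIsCokernel δa) hco2
        WalkingParallelPair.one
  let hinv : ((τ : A ⥤ A).op : Aᵒᵖ ⥤ Aᵒᵖ) ⟶ cokernel δa :=
    (IsColimit.coconePointUniqueUpToIso (cokernelIsCokernel δa) hco2).inv
  have hπ : cokernel.π δa = NatTrans.op τ.arrow ≫ hinv := by
    rw [← hcomm, Category.assoc]
    show _ = _ ≫ _ ≫ (IsColimit.coconePointUniqueUpToIso (cokernelIsCokernel δa) hco2).inv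
    rw [Iso.hom_inv_id, Category.comp_id]
  show kernelSubobject (cokernel.π δa ≫ Functor.whiskerLeft (cokernel δa) (cokernel.π δa)) = _
  have hsplit : cokernel.π δa ≫ Functor.whiskerLeft (cokernel δa) (cokernel.π δa)
      = NatTrans.op (Functor.whiskerLeft (τ : A ⥤ A) τ.arrow ≫ τ.arrow)
        ≫ (Functor.whiskerRight hinv (τ : A ⥤ A).op ≫ Functor.whiskerLeft (cokernel δa) hinv) := by
    rw [hπ]
    ext X
    simp only [NatTrans.comp_app, Functor.whiskerLeft_app, Functor.whiskerRight_app, NatTrans.op_app,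
      op_comp, Category.assoc]
    congr 1
    rw [← Category.assoc, ← Category.assoc]
    congr 1
    simpa using (NatTrans.op τ.arrow).naturality (hinv.app X)
  rw [hsplit, kernelSubobject_comp_mono]

lemma delta_radical_iff (τ : Subobject (𝟭 A)) :
    preradCoprod (preradDelta τ) (preradDelta τ) = preradDelta τ ↔ preradProd τ τ = τ := by
  have hδ : preradDelta τ = Subobject.mk (NatTrans.op (cokernel.π τ.arrow)) :=
    imageSubobject_mono _
  haveI hMm : Mono (Functor.whiskerLeft (τ : A ⥤ A) τ.arrow ≫ τ.arrow) := by
    haveI : ∀ X : A, Mono ((Functor.whiskerLeft (τ : A ⥤ A) τ.arrow ≫ τ.arrow).app X) := by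
      intro X
      show Mono (τ.arrow.app ((τ : A ⥤ A).obj X) ≫ τ.arrow.app X)
      infer_instance
    exact NatTrans.mono_of_mono_app _
  rw [hδ, coprod_delta_eq τ]
  have w3 : NatTrans.op (cokernel.π (Functor.whiskerLeft (τ : A ⥤ A) τ.arrow ≫ τ.arrow))
      ≫ NatTrans.op (Functor.whiskerLeft (τ : A ⥤ A) τ.arrow ≫ τ.arrow) = 0 := by
    rw [← op_comp', cokernel.condition]; exact op_zero'
  have hlim : IsLimit (KernelFork.ofι
      (NatTrans.op (cokernel.π (Functor.whiskerLeft (τ : A ⥤ A) τ.arrow ≫ τ.arrow))) w3) :=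
    isKernelOfOpCokernel _ _ (cokernel.condition _)
      (cokernelIsCokernel (Functor.whiskerLeft (τ : A ⥤ A) τ.arrow ≫ τ.arrow)) w3
  have e1 : kernelSubobject (NatTrans.op (Functor.whiskerLeft (τ : A ⥤ A) τ.arrow ≫ τ.arrow))
      = Subobject.mk (NatTrans.op (cokernel.π (Functor.whiskerLeft (τ : A ⥤ A) τ.arrow ≫ τ.arrow))) :=
    kernelSubobject_eq_mk hlim
  rw [e1, mk_op_eq_mk_op_iff]
  have e2 : kernelSubobject (cokernel.π (Functor.whiskerLeft (τ : A ⥤ A) τ.arrow ≫ τ.arrow))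
      = Subobject.mk (Functor.whiskerLeft (τ : A ⥤ A) τ.arrow ≫ τ.arrow) :=
    kernelSubobject_cokernelπ _
  have e3 : kernelSubobject (cokernel.π τ.arrow) = τ := by
    rw [kernelSubobject_cokernelπ τ.arrow, Subobject.mk_arrow]
  rw [e2, e3]
  have e4 : preradProd τ τ = Subobject.mk (Functor.whiskerLeft (τ : A ⥤ A) τ.arrow ≫ τ.arrow) :=
    imageSubobject_mono _
  rw [e4]

end PreradicalDualityAux

open PreradicalDualityAux Opposite

/-- `τ` is a radical iff `Δτ` is idempotent, and `τ` is idempotent iff `Δτ` is a radical. -/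
theorem prerad_radical_idem_iff_delta (τ : Subobject (𝟭 A)) :
    (preradCoprod τ τ = τ ↔ preradProd (preradDelta τ) (preradDelta τ) = preradDelta τ) ∧
      (preradProd τ τ = τ ↔ preradCoprod (preradDelta τ) (preradDelta τ) = preradDelta τ) :=
  ⟨(delta_idem_iff τ).symm, (delta_radical_iff τ).symm⟩
end
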